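/- Let 𝒱(x,v) = β F(x) + (β/4)γ²(‖x + γ⁻¹v‖² + ‖γ⁻¹v‖² - λ‖x‖²) with F ≥ 0, β, γ > 0, 0 < λ ≤ 1/4. Then the gradient in v satisfies ∇_v 𝒱(x,v) = βv + (βγ/2)x, and ‖∇_v 𝒱(x,v)‖² ≤ (12β/(1-2λ)) · 𝒱(x,v) for all (x,v). -/

import Mathlib

open InnerProductSpace

private lemma key_scalar (a b t lam : ℝ)
    (ht : -(a*b) ≤ t) (hl0 : 0 < lam) (hl : lam ≤ 1/4) :
    (b^2 + t + a^2/4) * (1-2*lam) ≤ 3*(a^2 + 2*t + 2*b^2 - lam*a^2) := by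
  nlinarith [sq_nonneg (a - 2*b), mul_nonneg hl0.le (sq_nonneg (a-2*b)),
    mul_nonneg hl0.le (by linarith : (0:ℝ) ≤ t + a*b), sq_nonneg b]

private lemma key_ineq (a b t Fx β lam : ℝ) (hF : 0 ≤ Fx) (hβ : 0 < β)
    (ht : -(a*b) ≤ t) (hl0 : 0 < lam) (hl : lam ≤ 1/4) :
    β^2*b^2 + β^2*t + β^2/4*a^2 ≤
      12*β/(1-2*lam) * (β*Fx + β/4*(a^2 + 2*t + 2*b^2 - lam*a^2)) := by
  have hrw : 12*β/(1-2*lam) * (β*Fx + β/4*(a^2 + 2*t + 2*b^2 - lam*a^2))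
      = (12*β * (β*Fx + β/4*(a^2 + 2*t + 2*b^2 - lam*a^2))) / (1-2*lam) := by ring
  rw [hrw, le_div_iff₀ (by linarith : (0:ℝ) < 1 - 2*lam)]
  have hS := key_scalar a b t lam ht hl0 hl
  have h2 := mul_le_mul_of_nonneg_left hS (sq_nonneg β)
  have h3 : 0 ≤ β^2 * Fx := mul_nonneg (sq_nonneg β) hF
  nlinarith [h2, h3]

private lemma grad_affine_norm_sq {d : ℕ} (x v : EuclideanSpace ℝ (Fin d)) (s : ℝ) :
    HasFDerivAt (fun w : EuclideanSpace ℝ (Fin d) => ‖x + s • w‖ ^ 2)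
      (2 • (innerSL ℝ (x + s • v)).comp (s • ContinuousLinearMap.id ℝ _)) v := by
  have h : HasFDerivAt (fun w : EuclideanSpace ℝ (Fin d) => x + s • w)
      (s • ContinuousLinearMap.id ℝ _) v := by
    exact ((hasFDerivAt_id (𝕜 := ℝ) v).const_smul s).const_add x
  exact h.norm_sq

theorem stmt6 {d : ℕ} (F : EuclideanSpace ℝ (Fin d) → ℝ)
    (β γ lam : ℝ) (hβ : 0 < β) (hγ : 0 < γ) (hlam0 : 0 < lam) (hlam : lam ≤ 1/4)
    (hF : ContDiff ℝ 1 F) (hFpos : ∀ x, 0 ≤ F x)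
    (V : EuclideanSpace ℝ (Fin d) → EuclideanSpace ℝ (Fin d) → ℝ)
    (hV : ∀ x v, V x v = β * F x +
      β / 4 * γ ^ 2 * (‖x + γ⁻¹ • v‖ ^ 2 + ‖γ⁻¹ • v‖ ^ 2 - lam * ‖x‖ ^ 2)) :
    ∀ x v : EuclideanSpace ℝ (Fin d),
      gradient (fun w => V x w) v = β • v + (β * γ / 2) • x ∧
      ‖gradient (fun w => V x w) v‖ ^ 2 ≤ 12 * β / (1 - 2 * lam) * V x v := by
  intro x v
  have hγ0 : γ ≠ 0 := ne_of_gt hγ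
  set g : EuclideanSpace ℝ (Fin d) := β • v + (β * γ / 2) • x with hg
  -- gradient computation
  have h1 := grad_affine_norm_sq x v γ⁻¹
  have h2 := grad_affine_norm_sq (0 : EuclideanSpace ℝ (Fin d)) v γ⁻¹
  simp only [zero_add] at h2
  have hfd : HasFDerivAt (fun w => V x w) ((toDual ℝ (EuclideanSpace ℝ (Fin d))) g) v := by
    have hsum : HasFDerivAt (fun w : EuclideanSpace ℝ (Fin d) =>
        β * F x + β / 4 * γ ^ 2 * (‖x + γ⁻¹ • w‖ ^ 2 + ‖γ⁻¹ • w‖ ^ 2 - lam * ‖x‖ ^ 2))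
        ((β / 4 * γ ^ 2) •
          ((2 • (innerSL ℝ (x + γ⁻¹ • v)).comp (γ⁻¹ • ContinuousLinearMap.id ℝ _)
            + 2 • (innerSL ℝ (γ⁻¹ • v)).comp (γ⁻¹ • ContinuousLinearMap.id ℝ _)) - 0)) v := by
      exact (((h1.add h2).sub (hasFDerivAt_const (lam * ‖x‖ ^ 2) v)).const_mul
        (β / 4 * γ ^ 2)).const_add (β * F x)
    have heq : ((toDual ℝ (EuclideanSpace ℝ (Fin d))) g) =
        ((β / 4 * γ ^ 2) •
          ((2 • (innerSL ℝ (x + γ⁻¹ • v)).comp (γ⁻¹ • ContinuousLinearMap.id ℝ _)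
            + 2 • (innerSL ℝ (γ⁻¹ • v)).comp (γ⁻¹ • ContinuousLinearMap.id ℝ _)) - 0)) := by
      ext h
      simp [hg, inner_add_left, real_inner_smul_left, real_inner_smul_right, two_smul]
      field_simp
      ring
    rw [heq]
    simp only [hV]
    exact hsum
  have hgrad : gradient (fun w => V x w) v = g :=
    (hasGradientAt_iff_hasFDerivAt.mpr hfd).gradient
  refine ⟨hgrad, ?_⟩
  rw [hgrad]
  -- the bound
  set a : ℝ := γ * ‖x‖ with ha
  set b : ℝ := ‖v‖ with hb
  set t : ℝ := γ * inner ℝ x v with htdef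
  have hCS : |(inner ℝ x v : ℝ)| ≤ ‖x‖ * ‖v‖ := abs_real_inner_le_norm x v
  have ht : -(a*b) ≤ t := by
    rw [abs_le] at hCS
    have := hCS.1
    rw [ha, hb, htdef]
    nlinarith [hγ.le]
  have hgnorm : ‖g‖ ^ 2 = β^2*b^2 + β^2*t + β^2/4*a^2 := by
    rw [hg, norm_add_sq_real, norm_smul, norm_smul, real_inner_smul_left, real_inner_smul_right,
      real_inner_comm x v]
    simp [abs_of_pos hβ, abs_of_pos hγ, ha, hb, htdef]
    ring
  have hVeq : V x v = β * F x + β/4*(a^2 + 2*t + 2*b^2 - lam*a^2) := by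
    rw [hV, norm_add_sq_real, norm_smul, real_inner_smul_right]
    simp only [ha, hb, htdef, norm_smul]
    rw [Real.norm_eq_abs, abs_of_pos (inv_pos.mpr hγ)]
    field_simp
    ring
  rw [hgnorm, hVeq]
  exact key_ineq a b t (F x) β lam (hFpos x) hβ ht hlam0 hlam
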